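/- There exist origin-symmetric convex bodies K, T ⊆ ℝ² for which γ_2(conv(K ∪ T))·γ_2(K ∩ T) < γ_2(K)·γ_2(T). Concretely, for N ≥ 3, K = [-1/N, 1/N] × [-N, N] and T = [-N, N] × [-1/N, 1/N] provide such an example. -/

import Mathlib

open MeasureTheory ProbabilityTheory
open scoped ENNReal

/-- The standard Gaussian probability measure on `ℝ²`. -/
noncomputable def stdGaussian2 : Measure (Fin 2 → ℝ) :=
  Measure.pi fun _ => gaussianReal 0 1

noncomputable def g1 (a : ℝ) : ℝ≥0∞ := gaussianReal 0 1 (Set.Icc (-a) a)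

lemma gauss_pos {s : Set ℝ} (h : volume s ≠ 0) : gaussianReal 0 1 s ≠ 0 := by
  intro h0
  exact h (gaussianReal_absolutelyContinuous' 0 (by norm_num) h0)

lemma g1_pos {a : ℝ} (ha : 0 < a) : g1 a ≠ 0 := by
  apply gauss_pos
  rw [Real.volume_Icc]
  simp only [ne_eq, ENNReal.ofReal_eq_zero, not_le]
  linarith

lemma rect_eq (a b : ℝ) : {x : Fin 2 → ℝ | |x 0| ≤ a ∧ |x 1| ≤ b}
    = Set.univ.pi (fun i => Set.Icc (-(![a, b] i)) (![a, b] i)) := by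
  ext x
  simp only [Set.mem_setOf_eq, Set.mem_univ_pi, Fin.forall_fin_two, Matrix.cons_val_zero,
    Matrix.cons_val_one, Matrix.head_cons, Set.mem_Icc, abs_le]

lemma meas_rect (a b : ℝ) :
    stdGaussian2 {x | |x 0| ≤ a ∧ |x 1| ≤ b} = g1 a * g1 b := by
  rw [rect_eq, stdGaussian2, Measure.pi_pi, Fin.prod_univ_two]
  rfl

instance : IsProbabilityMeasure stdGaussian2 := by
  rw [stdGaussian2]; infer_instance

lemma main_ineq (N : ℝ) (hN : 3 ≤ N) :
    stdGaussian2 (convexHull ℝ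
          ({x | |x 0| ≤ 1 / N ∧ |x 1| ≤ N} ∪ {x | |x 0| ≤ N ∧ |x 1| ≤ 1 / N})) *
        stdGaussian2 ({x | |x 0| ≤ 1 / N ∧ |x 1| ≤ N} ∩ {x | |x 0| ≤ N ∧ |x 1| ≤ 1 / N}) <
      stdGaussian2 {x | |x 0| ≤ 1 / N ∧ |x 1| ≤ N} *
        stdGaussian2 {x | |x 0| ≤ N ∧ |x 1| ≤ 1 / N} := by
  have hN0 : (0:ℝ) < N := by linarith
  have hinv : (0:ℝ) < 1 / N := by positivity
  have h1N : 1 / N < N := by rw [div_lt_iff₀ hN0]; nlinarith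
  have hinvN : 1 / N ≤ N := le_of_lt h1N
  -- intersection is the small square
  have hinter : {x : Fin 2 → ℝ | |x 0| ≤ 1 / N ∧ |x 1| ≤ N} ∩
      {x | |x 0| ≤ N ∧ |x 1| ≤ 1 / N} = {x | |x 0| ≤ 1 / N ∧ |x 1| ≤ 1 / N} := by
    ext x
    simp only [Set.mem_inter_iff, Set.mem_setOf_eq]
    constructor
    · rintro ⟨⟨h1, _⟩, ⟨_, h4⟩⟩; exact ⟨h1, h4⟩
    · rintro ⟨h1, h2⟩; exact ⟨⟨h1, h2.trans hinvN⟩, ⟨h1.trans hinvN, h2⟩⟩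
  set B : Set (Fin 2 → ℝ) :=
    {x | |x 0| ≤ N ∧ |x 1| ≤ N ∧ x 0 + x 1 ≤ N + 1 / N} with hB
  have hBconv : Convex ℝ B := by
    intro x hx y hy a b ha hb hab
    obtain ⟨hx1, hx2, hx3⟩ := hx
    obtain ⟨hy1, hy2, hy3⟩ := hy
    have e0 : (a • x + b • y) 0 = a * x 0 + b * y 0 := rfl
    have e1 : (a • x + b • y) 1 = a * x 1 + b * y 1 := rfl
    refine ⟨?_, ?_, ?_⟩
    · rw [e0]
      calc |a * x 0 + b * y 0| ≤ |a * x 0| + |b * y 0| := abs_add_le _ _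
        _ = a * |x 0| + b * |y 0| := by rw [abs_mul, abs_mul, abs_of_nonneg ha, abs_of_nonneg hb]
        _ ≤ a * N + b * N := by gcongr
        _ = N := by rw [← add_mul, hab, one_mul]
    · rw [e1]
      calc |a * x 1 + b * y 1| ≤ |a * x 1| + |b * y 1| := abs_add_le _ _
        _ = a * |x 1| + b * |y 1| := by rw [abs_mul, abs_mul, abs_of_nonneg ha, abs_of_nonneg hb]
        _ ≤ a * N + b * N := by gcongr
        _ = N := by rw [← add_mul, hab, one_mul]
    · rw [e0, e1]
      have : a * x 0 + b * y 0 + (a * x 1 + b * y 1)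
          = a * (x 0 + x 1) + b * (y 0 + y 1) := by ring
      rw [this]
      calc a * (x 0 + x 1) + b * (y 0 + y 1) ≤ a * (N + 1/N) + b * (N + 1/N) := by gcongr
        _ = N + 1/N := by rw [← add_mul, hab, one_mul]
  have hKB : {x : Fin 2 → ℝ | |x 0| ≤ 1 / N ∧ |x 1| ≤ N} ⊆ B := by
    rintro x ⟨h1, h2⟩
    have h0 := abs_le.1 h1
    have h1' := abs_le.1 h2
    exact ⟨h1.trans hinvN, h2, by linarith⟩
  have hTB : {x : Fin 2 → ℝ | |x 0| ≤ N ∧ |x 1| ≤ 1 / N} ⊆ B := by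
    rintro x ⟨h1, h2⟩
    have h0 := abs_le.1 h1
    have h1' := abs_le.1 h2
    exact ⟨h1, h2.trans hinvN, by linarith⟩
  have hconvB : convexHull ℝ
      ({x : Fin 2 → ℝ | |x 0| ≤ 1 / N ∧ |x 1| ≤ N} ∪ {x | |x 0| ≤ N ∧ |x 1| ≤ 1 / N}) ⊆ B :=
    convexHull_min (Set.union_subset hKB hTB) hBconv
  -- B has smaller measure than the big square
  set m : ℝ := (N + 1 / N) / 2 with hm
  have hmm : m + m = N + 1 / N := by rw [hm]; ring
  have hmN : m < N := by rw [hm]; linarith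
  have hm0 : 0 < m := by rw [hm]; positivity
  set U : Set (Fin 2 → ℝ) := Set.univ.pi (fun _ => Set.Ioo m N) with hU
  have hUsub : U ⊆ {x : Fin 2 → ℝ | |x 0| ≤ N ∧ |x 1| ≤ N} \ B := by
    intro x hx
    have h0 : x 0 ∈ Set.Ioo m N := hx 0 (Set.mem_univ _)
    have h1 : x 1 ∈ Set.Ioo m N := hx 1 (Set.mem_univ _)
    constructor
    · exact ⟨abs_le.2 ⟨by linarith [h0.1], le_of_lt h0.2⟩,
        abs_le.2 ⟨by linarith [h1.1], le_of_lt h1.2⟩⟩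
    · intro hxB
      have h3 := hxB.2.2
      have h4 := h0.1
      have h5 := h1.1
      linarith
  have hBmeas : MeasurableSet B := by
    apply MeasurableSet.inter
    · exact measurableSet_le ((measurable_pi_apply 0).abs) measurable_const
    apply MeasurableSet.inter
    · exact measurableSet_le ((measurable_pi_apply 1).abs) measurable_const
    · exact measurableSet_le ((measurable_pi_apply 0).add (measurable_pi_apply 1))
        measurable_const
  have hUpos : stdGaussian2 U ≠ 0 := by
    rw [hU, stdGaussian2, Measure.pi_pi, Fin.prod_univ_two]
    apply mul_ne_zero <;>
    · apply gauss_pos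
      rw [Real.volume_Ioo]
      simp only [ne_eq, ENNReal.ofReal_eq_zero, not_le]
      linarith
  have hBU : Disjoint B U := by
    rw [Set.disjoint_right]
    intro x hx
    exact fun hB' => (hUsub hx).2 hB'
  have hBltS : stdGaussian2 B < stdGaussian2 {x : Fin 2 → ℝ | |x 0| ≤ N ∧ |x 1| ≤ N} := by
    have hle : stdGaussian2 B + stdGaussian2 U ≤
        stdGaussian2 {x : Fin 2 → ℝ | |x 0| ≤ N ∧ |x 1| ≤ N} := by
      rw [← measure_union hBU (MeasurableSet.univ_pi fun i => measurableSet_Ioo)]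
      apply measure_mono
      apply Set.union_subset
      · intro x hx
        exact ⟨hx.1, hx.2.1⟩
      · exact fun x hx => (hUsub hx).1
    calc stdGaussian2 B < stdGaussian2 B + stdGaussian2 U :=
          ENNReal.lt_add_right (measure_ne_top _ _) hUpos
      _ ≤ _ := hle
  have hc0 : stdGaussian2 ({x : Fin 2 → ℝ | |x 0| ≤ 1 / N ∧ |x 1| ≤ N} ∩
      {x | |x 0| ≤ N ∧ |x 1| ≤ 1 / N}) ≠ 0 := by
    rw [hinter, meas_rect]
    exact mul_ne_zero (g1_pos hinv) (g1_pos hinv)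
  have hcT : stdGaussian2 ({x : Fin 2 → ℝ | |x 0| ≤ 1 / N ∧ |x 1| ≤ N} ∩
      {x | |x 0| ≤ N ∧ |x 1| ≤ 1 / N}) ≠ ⊤ := measure_ne_top _ _
  calc stdGaussian2 (convexHull ℝ _) * stdGaussian2 _
      ≤ stdGaussian2 B * stdGaussian2 ({x : Fin 2 → ℝ | |x 0| ≤ 1 / N ∧ |x 1| ≤ N} ∩
        {x | |x 0| ≤ N ∧ |x 1| ≤ 1 / N}) :=
        mul_le_mul_left (measure_mono hconvB) _
    _ < stdGaussian2 {x : Fin 2 → ℝ | |x 0| ≤ N ∧ |x 1| ≤ N} *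
        stdGaussian2 ({x : Fin 2 → ℝ | |x 0| ≤ 1 / N ∧ |x 1| ≤ N} ∩
        {x | |x 0| ≤ N ∧ |x 1| ≤ 1 / N}) :=
        (mul_comm _ _).trans_lt ((ENNReal.mul_lt_mul_right hc0 hcT hBltS).trans_eq (mul_comm _ _))
    _ = _ := by
        rw [hinter, meas_rect, meas_rect, meas_rect, meas_rect]
        ring

theorem stmt14 :
    (∀ N : ℝ, 3 ≤ N →
      stdGaussian2 (convexHull ℝ
            ({x | |x 0| ≤ 1 / N ∧ |x 1| ≤ N} ∪ {x | |x 0| ≤ N ∧ |x 1| ≤ 1 / N})) *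
          stdGaussian2 ({x | |x 0| ≤ 1 / N ∧ |x 1| ≤ N} ∩ {x | |x 0| ≤ N ∧ |x 1| ≤ 1 / N}) <
        stdGaussian2 {x | |x 0| ≤ 1 / N ∧ |x 1| ≤ N} *
          stdGaussian2 {x | |x 0| ≤ N ∧ |x 1| ≤ 1 / N}) ∧
      ∃ K T : Set (Fin 2 → ℝ),
        Convex ℝ K ∧ K = -K ∧ IsCompact K ∧ (interior K).Nonempty ∧
        Convex ℝ T ∧ T = -T ∧ IsCompact T ∧ (interior T).Nonempty ∧
        stdGaussian2 (convexHull ℝ (K ∪ T)) * stdGaussian2 (K ∩ T) <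
          stdGaussian2 K * stdGaussian2 T := by
  constructor
  · exact main_ineq
  · refine ⟨{x | |x 0| ≤ 1 / 3 ∧ |x 1| ≤ 3}, {x | |x 0| ≤ 3 ∧ |x 1| ≤ 1 / 3},
      ?_, ?_, ?_, ?_, ?_, ?_, ?_, ?_, ?_⟩
    · rw [rect_eq]
      exact convex_pi fun i _ => convex_Icc _ _
    · ext x
      simp only [Set.mem_neg, Set.mem_setOf_eq, Pi.neg_apply, abs_neg]
    · rw [rect_eq]
      exact isCompact_univ_pi fun i => isCompact_Icc
    · refine ⟨0, ?_⟩
      have hsub : {x : Fin 2 → ℝ | |x 0| < 1 / 3 ∧ |x 1| < 3} ⊆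
          {x : Fin 2 → ℝ | |x 0| ≤ 1 / 3 ∧ |x 1| ≤ 3} :=
        fun x hx => ⟨le_of_lt hx.1, le_of_lt hx.2⟩
      have hopen : IsOpen {x : Fin 2 → ℝ | |x 0| < 1 / 3 ∧ |x 1| < 3} := by
        have : {x : Fin 2 → ℝ | |x 0| < 1 / 3 ∧ |x 1| < 3}
            = Set.univ.pi (fun i => Set.Ioo (-(![(1:ℝ)/3, 3] i)) (![(1:ℝ)/3, 3] i)) := by
          ext x
          simp only [Set.mem_setOf_eq, Set.mem_univ_pi, Fin.forall_fin_two, Matrix.cons_val_zero,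
            Matrix.cons_val_one, Matrix.head_cons, Set.mem_Ioo, abs_lt]
        rw [this]
        exact isOpen_set_pi Set.finite_univ fun i _ => isOpen_Ioo
      refine interior_maximal hsub hopen ?_
      constructor <;> norm_num
    · rw [rect_eq]
      exact convex_pi fun i _ => convex_Icc _ _
    · ext x
      simp only [Set.mem_neg, Set.mem_setOf_eq, Pi.neg_apply, abs_neg]
    · rw [rect_eq]
      exact isCompact_univ_pi fun i => isCompact_Icc
    · refine ⟨0, ?_⟩
      have hsub : {x : Fin 2 → ℝ | |x 0| < 3 ∧ |x 1| < 1 / 3} ⊆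
          {x : Fin 2 → ℝ | |x 0| ≤ 3 ∧ |x 1| ≤ 1 / 3} :=
        fun x hx => ⟨le_of_lt hx.1, le_of_lt hx.2⟩
      have hopen : IsOpen {x : Fin 2 → ℝ | |x 0| < 3 ∧ |x 1| < 1 / 3} := by
        have : {x : Fin 2 → ℝ | |x 0| < 3 ∧ |x 1| < 1 / 3}
            = Set.univ.pi (fun i => Set.Ioo (-(![(3:ℝ), 1/3] i)) (![(3:ℝ), 1/3] i)) := by
          ext x
          simp only [Set.mem_setOf_eq, Set.mem_univ_pi, Fin.forall_fin_two, Matrix.cons_val_zero,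
            Matrix.cons_val_one, Matrix.head_cons, Set.mem_Ioo, abs_lt]
        rw [this]
        exact isOpen_set_pi Set.finite_univ fun i _ => isOpen_Ioo
      refine interior_maximal hsub hopen ?_
      constructor <;> norm_num
    · have h := main_ineq 3 le_rfl
      norm_num at h ⊢
      convert h using 2
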